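/- Backward move B1: If (α_n)_{n≥0}, (β_n)_{n≥0} form a Bailey pair with respect to base a, where a ≠ 0 and a q^m ≠ 1 for all m ≥ 1, then the sequences β'_n = (−1)^n a^{−n} q^{−n²} Σ_{j=0}^{n} (−1)^j (q^{binom(n−j,2)} / (q;q)_{n−j}) β_j and α'_n = a^{−n} q^{−n²} α_n also form a Bailey pair with respect to base a, where binom(m,2) = m(m−1)/2. -/

import Mathlib

open Finset

noncomputable def qPoch (a q : ℂ) (n : ℕ) : ℂ :=
  ∏ t ∈ Finset.range n, (1 - a * q ^ t)

noncomputable def qPochInf (a q : ℂ) : ℂ :=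
  ∏' t : ℕ, (1 - a * q ^ t)

def IsBaileyPair (q a : ℂ) (α β : ℕ → ℂ) : Prop :=
  ∀ n : ℕ, β n =
    ∑ t ∈ Finset.range (n + 1), α t / (qPoch q q (n - t) * qPoch (a * q) q (n + t))

/- ### Auxiliary lemmas -/

lemma qPoch_zero' (a q : ℂ) : qPoch a q 0 = 1 := by simp [qPoch]

lemma qPoch_succ' (a q : ℂ) (n : ℕ) :
    qPoch a q (n + 1) = qPoch a q n * (1 - a * q ^ n) :=
  Finset.prod_range_succ _ _

lemma qPoch_add' (a q : ℂ) (m n : ℕ) :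
    qPoch a q (m + n) = qPoch a q m * qPoch (a * q ^ m) q n := by
  unfold qPoch
  rw [Finset.prod_range_add]
  congr 1
  refine Finset.prod_congr rfl fun t _ => ?_
  rw [pow_add]; ring

lemma q_pow_ne_one' {q : ℂ} (hq0 : 0 < ‖q‖) (hq1 : ‖q‖ < 1)
    {m : ℕ} (hm : m ≠ 0) : q ^ m ≠ 1 := by
  intro hc
  have h1 : ‖q ^ m‖ = 1 := by rw [hc]; simp
  rw [norm_pow] at h1
  have h2 : ‖q‖ ^ m < 1 := pow_lt_one₀ (le_of_lt hq0) hq1 hm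
  rw [h1] at h2; exact lt_irrefl 1 h2

lemma Pq_ne_zero' {q : ℂ} (hq0 : 0 < ‖q‖) (hq1 : ‖q‖ < 1)
    (n : ℕ) : qPoch q q n ≠ 0 := by
  unfold qPoch
  rw [Finset.prod_ne_zero_iff]
  intro t _ hc
  exact q_pow_ne_one' hq0 hq1 (Nat.succ_ne_zero t)
    (by rw [pow_succ']; linear_combination -hc)

lemma Pas_ne_zero' {q a : ℂ} (ha : ∀ m : ℕ, 1 ≤ m → a * q ^ m ≠ 1)
    {s : ℕ} (hs : 1 ≤ s) (n : ℕ) : qPoch (a * q ^ s) q n ≠ 0 := by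
  unfold qPoch
  rw [Finset.prod_ne_zero_iff]
  intro t _ hc
  exact ha (s + t) (by omega) (by rw [pow_add]; linear_combination -hc)

lemma Paq_ne_zero' {q a : ℂ} (ha : ∀ m : ℕ, 1 ≤ m → a * q ^ m ≠ 1)
    (n : ℕ) : qPoch (a * q) q n ≠ 0 := by
  have := Pas_ne_zero' (q := q) (a := a) ha (s := 1) le_rfl n
  rwa [pow_one] at this

/-- Gaussian binomial coefficients, defined via the Pascal recurrence. -/
noncomputable def gB (q : ℂ) : ℕ → ℕ → ℂ
  | _, 0 => 1
  | 0, _ + 1 => 0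
  | m + 1, k + 1 => q ^ (k + 1) * gB q m (k + 1) + gB q m k

lemma gB_zero (q : ℂ) (m : ℕ) : gB q m 0 = 1 := by cases m <;> simp [gB]

lemma gB_of_lt (q : ℂ) : ∀ m k : ℕ, m < k → gB q m k = 0 := by
  intro m
  induction m with
  | zero => intro k hk; match k, hk with | k + 1, _ => simp [gB]
  | succ m ih =>
    intro k hk
    match k, hk with
    | k + 1, hk =>
      simp only [gB]
      rw [ih (k+1) (by omega), ih k (by omega)]
      ring

lemma gB_self (q : ℂ) : ∀ m : ℕ, gB q m m = 1 := by
  intro m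
  induction m with
  | zero => simp [gB]
  | succ m ih => simp only [gB]; rw [gB_of_lt q m (m+1) (by omega), ih]; ring

lemma gB_mul (q : ℂ) : ∀ N k d : ℕ, k + d = N →
    gB q (k + d) k * (qPoch q q k * qPoch q q d) = qPoch q q (k + d) := by
  intro N
  induction N using Nat.strong_induction_on with
  | _ N ih =>
    intro k d hN
    match k with
    | 0 => simp [gB_zero, qPoch_zero']
    | k + 1 =>
      match d with
      | 0 => rw [Nat.add_zero, gB_self, qPoch_zero']; ring
      | d + 1 =>
        have e1 : k + 1 + (d + 1) = (k + 1 + d) + 1 := by omega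
        rw [e1]
        simp only [gB]
        have ih1 : gB q (k + 1 + d) (k + 1) * (qPoch q q (k+1) * qPoch q q d)
            = qPoch q q (k + 1 + d) := ih (k + 1 + d) (by omega) (k+1) d rfl
        have ih2 : gB q (k + (d + 1)) k * (qPoch q q k * qPoch q q (d+1))
            = qPoch q q (k + (d + 1)) := ih (k + d + 1) (by omega) k (d+1) (by omega)
        have e2 : k + (d + 1) = k + 1 + d := by omega
        rw [e2] at ih2
        rw [qPoch_succ' q q (k + 1 + d), qPoch_succ' q q d, qPoch_succ' q q k]
        rw [qPoch_succ' q q k] at ih1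
        rw [qPoch_succ' q q d] at ih2
        linear_combination (q^(k+1) * (1 - q*q^d)) * ih1 + (1 - q*q^k) * ih2

lemma choose2_succ (j : ℕ) : (j + 1).choose 2 = j.choose 2 + j := by
  rw [show (2:ℕ) = 1 + 1 from rfl, Nat.choose_succ_succ, Nat.choose_one_right, Nat.add_comm]

lemma claimA (q : ℂ) : ∀ (m : ℕ) (b : ℂ),
    ∑ k ∈ range (m + 1),
      (-1 : ℂ) ^ k * q ^ ((m - k).choose 2) * gB q m k * qPoch (b * q ^ (k + 1)) q (m - k)
    = (-1) ^ m * b ^ m * q ^ (m ^ 2) := by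
  intro m
  induction m with
  | zero => intro b; simp [gB, qPoch]
  | succ m ih =>
    intro b
    rw [Finset.sum_range_succ']
    have hsplit : ∀ k ∈ range (m + 1),
        (-1 : ℂ) ^ (k+1) * q ^ ((m + 1 - (k+1)).choose 2) * gB q (m+1) (k+1) *
            qPoch (b * q ^ (k+1+1)) q (m + 1 - (k+1))
        = ((-1 : ℂ) ^ (k+1) * q ^ ((m - k).choose 2) * (q ^ (k+1) * gB q m (k+1)) *
              qPoch (b * q ^ (k+1+1)) q (m - k))
          + (-((-1 : ℂ) ^ k * q ^ ((m - k).choose 2) * gB q m k *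
              qPoch ((b * q) * q ^ (k+1)) q (m - k))) := by
      intro k hk
      have h1 : m + 1 - (k + 1) = m - k := by omega
      have h2 : gB q (m+1) (k+1) = q ^ (k+1) * gB q m (k+1) + gB q m k := by simp [gB]
      have h3 : (b * q) * q ^ (k+1) = b * q ^ (k+1+1) := by ring
      rw [h1, h2, h3]
      ring
    rw [Finset.sum_congr rfl hsplit, Finset.sum_add_distrib, Finset.sum_neg_distrib]
    rw [ih (b * q)]
    have key2 : (∑ k ∈ range (m+1),
        (-1 : ℂ) ^ (k+1) * q ^ ((m - k).choose 2) * (q ^ (k+1) * gB q m (k+1)) *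
          qPoch (b * q ^ (k+1+1)) q (m - k))
        + (-1 : ℂ) ^ 0 * q ^ ((m + 1 - 0).choose 2) * gB q (m+1) 0 *
            qPoch (b * q ^ (0+1)) q (m + 1 - 0)
        = q ^ m * (1 - b * q ^ (m+1)) * ((-1 : ℂ) ^ m * b ^ m * q ^ (m ^ 2)) := by
      have keyA : (∑ k ∈ range (m+1),
          (-1 : ℂ) ^ (k+1) * q ^ ((m - k).choose 2) * (q ^ (k+1) * gB q m (k+1)) *
            qPoch (b * q ^ (k+1+1)) q (m - k))
          + (-1 : ℂ) ^ 0 * q ^ ((m + 1 - 0).choose 2) * gB q (m+1) 0 *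
              qPoch (b * q ^ (0+1)) q (m + 1 - 0)
          = ∑ k ∈ range (m+1), q ^ m * (1 - b * q ^ (m+1)) *
              ((-1 : ℂ) ^ k * q ^ ((m - k).choose 2) * gB q m k *
                qPoch (b * q ^ (k+1)) q (m - k)) := by
        rw [Finset.sum_range_succ' (fun k => q ^ m * (1 - b * q ^ (m+1)) *
              ((-1 : ℂ) ^ k * q ^ ((m - k).choose 2) * gB q m k *
                qPoch (b * q ^ (k+1)) q (m - k))) m]
        rw [Finset.sum_range_succ]
        congr 1
        · rw [gB_of_lt q m (m+1) (by omega)]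
          simp only [mul_zero, zero_mul, add_zero]
          refine Finset.sum_congr rfl fun k hk => ?_
          rw [Finset.mem_range] at hk
          obtain ⟨j, rfl⟩ : ∃ j, m = k + 1 + j := ⟨m - (k+1), by omega⟩
          have e1 : k + 1 + j - k = j + 1 := by omega
          have e2 : k + 1 + j - (k + 1) = j := by omega
          rw [e1, e2, choose2_succ, qPoch_succ']
          ring
        · simp only [Nat.sub_zero, gB_zero, pow_zero, one_mul, mul_one]
          rw [choose2_succ, qPoch_succ']
          ring
      rw [keyA, ← Finset.mul_sum, ih b]
    have h5 : (m+1)^2 = m^2 + (2*m+1) := by ring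
    rw [h5]
    linear_combination key2

lemma keyS {q a : ℂ} (hq0 : 0 < ‖q‖) (hq1 : ‖q‖ < 1)
    (ha : ∀ m : ℕ, 1 ≤ m → a * q ^ m ≠ 1) (t m : ℕ) :
    ∑ k ∈ range (m + 1),
      (-1 : ℂ) ^ (t + k) * q ^ ((m - k).choose 2) /
        (qPoch q q (m - k) * qPoch q q k * qPoch (a * q) q (t + k + t))
    = (-1) ^ (t + m) * a ^ m * q ^ (m ^ 2 + 2 * t * m) /
        (qPoch q q m * qPoch (a * q) q (t + m + t)) := by
  have hterm : ∀ k ∈ range (m + 1),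
      (-1 : ℂ) ^ (t + k) * q ^ ((m - k).choose 2) /
        (qPoch q q (m - k) * qPoch q q k * qPoch (a * q) q (t + k + t))
      = ((-1 : ℂ) ^ t / (qPoch q q m * qPoch (a * q) q (t + m + t))) *
        ((-1 : ℂ) ^ k * q ^ ((m - k).choose 2) * gB q m k *
          qPoch ((a * q ^ (2 * t)) * q ^ (k + 1)) q (m - k)) := by
    intro k hk
    rw [Finset.mem_range] at hk
    obtain ⟨d, rfl⟩ : ∃ d, m = k + d := ⟨m - k, by omega⟩
    have e0 : k + d - k = d := by omega
    rw [e0]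
    have e2 : qPoch (a * q) q (t + (k + d) + t)
        = qPoch (a * q) q (t + k + t) * qPoch ((a * q ^ (2 * t)) * q ^ (k + 1)) q d := by
      rw [show t + (k + d) + t = (t + k + t) + d by omega, qPoch_add']
      congr 2
      ring
    have e1 : gB q (k + d) k * (qPoch q q k * qPoch q q d) = qPoch q q (k + d) :=
      gB_mul q (k + d) k d rfl
    have hQd : qPoch q q d ≠ 0 := Pq_ne_zero' hq0 hq1 d
    have hQk : qPoch q q k ≠ 0 := Pq_ne_zero' hq0 hq1 k
    have hQkd : qPoch q q (k + d) ≠ 0 := Pq_ne_zero' hq0 hq1 (k + d)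
    have hAQ : qPoch (a * q) q (t + k + t) ≠ 0 := Paq_ne_zero' ha _
    have hP2 : qPoch ((a * q ^ (2 * t)) * q ^ (k + 1)) q d ≠ 0 := by
      have harg : (a * q ^ (2 * t)) * q ^ (k + 1) = a * q ^ (2 * t + (k + 1)) := by
        rw [pow_add]; ring
      rw [harg]
      exact Pas_ne_zero' ha (by omega) d
    rw [e2, div_mul_eq_mul_div, div_eq_div_iff
      (by exact mul_ne_zero (mul_ne_zero hQd hQk) hAQ)
      (by exact mul_ne_zero hQkd (mul_ne_zero hAQ hP2))]
    linear_combination (-((-1 : ℂ) ^ (t + k) * q ^ (d.choose 2) *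
      qPoch (a * q) q (t + k + t) * qPoch ((a * q ^ (2 * t)) * q ^ (k + 1)) q d)) * e1
  rw [Finset.sum_congr rfl hterm, ← Finset.mul_sum, claimA q m (a * q ^ (2 * t))]
  ring

theorem backward_move_B1 (q a : ℂ) (hq0 : 0 < ‖q‖) (hq1 : ‖q‖ < 1)
    (ha0 : a ≠ 0) (ha : ∀ m : ℕ, 1 ≤ m → a * q ^ m ≠ 1)
    (α β : ℕ → ℂ) (h : IsBaileyPair q a α β) :
    IsBaileyPair q a
      (fun n => a ^ (-(n : ℤ)) * q ^ (-(n : ℤ) ^ 2) * α n)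
      (fun n => (-1 : ℂ) ^ n * a ^ (-(n : ℤ)) * q ^ (-(n : ℤ) ^ 2) *
        ∑ j ∈ Finset.range (n + 1),
          (-1 : ℂ) ^ j * (q ^ ((n - j).choose 2) / qPoch q q (n - j)) * β j) := by
  have hqne : q ≠ 0 := by
    intro hq; rw [hq] at hq0; simp at hq0
  intro n
  dsimp only
  have hstep1 : ∀ j ∈ range (n + 1),
      (-1 : ℂ) ^ j * (q ^ ((n - j).choose 2) / qPoch q q (n - j)) * β j
      = ∑ t ∈ range (j + 1), (-1 : ℂ) ^ j * (q ^ ((n - j).choose 2) / qPoch q q (n - j)) *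
          (α t / (qPoch q q (j - t) * qPoch (a * q) q (j + t))) := by
    intro j _
    rw [h j, Finset.mul_sum]
  rw [Finset.sum_congr rfl hstep1]
  have hswap : ∑ j ∈ range (n + 1), ∑ t ∈ range (j + 1),
        (-1 : ℂ) ^ j * (q ^ ((n - j).choose 2) / qPoch q q (n - j)) *
          (α t / (qPoch q q (j - t) * qPoch (a * q) q (j + t)))
      = ∑ t ∈ range (n + 1), ∑ j ∈ Finset.Ico t (n + 1),
        (-1 : ℂ) ^ j * (q ^ ((n - j).choose 2) / qPoch q q (n - j)) *
          (α t / (qPoch q q (j - t) * qPoch (a * q) q (j + t))) := by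
    refine Finset.sum_comm' fun j t => ?_
    simp only [Finset.mem_range, Finset.mem_Ico]
    omega
  rw [hswap, Finset.mul_sum]
  refine Finset.sum_congr rfl fun t ht => ?_
  rw [Finset.mem_range] at ht
  obtain ⟨m, rfl⟩ : ∃ m, n = t + m := ⟨n - t, by omega⟩
  rw [Finset.sum_Ico_eq_sum_range]
  rw [show t + m + 1 - t = m + 1 by omega]
  have hinner : ∀ k ∈ range (m + 1),
      (-1 : ℂ) ^ (t + k) * (q ^ ((t + m - (t + k)).choose 2) / qPoch q q (t + m - (t + k))) *
        (α t / (qPoch q q (t + k - t) * qPoch (a * q) q (t + k + t)))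
      = α t * ((-1 : ℂ) ^ (t + k) * q ^ ((m - k).choose 2) /
          (qPoch q q (m - k) * qPoch q q k * qPoch (a * q) q (t + k + t))) := by
    intro k _
    rw [Nat.add_sub_add_left, Nat.add_sub_cancel_left]
    ring
  rw [Finset.sum_congr rfl hinner, ← Finset.mul_sum, keyS hq0 hq1 ha t m]
  rw [Nat.add_sub_cancel_left]
  have h1 : a ^ (-((t + m : ℕ) : ℤ)) * a ^ m = a ^ (-(t : ℤ)) := by
    rw [← zpow_natCast a m, ← zpow_add₀ ha0]
    congr 1
    push_cast; ring
  have h2 : q ^ (-((t + m : ℕ) : ℤ) ^ 2) * q ^ (m ^ 2 + 2 * t * m) = q ^ (-(t : ℤ) ^ 2) := by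
    rw [← zpow_natCast q (m ^ 2 + 2 * t * m), ← zpow_add₀ hqne]
    congr 1
    push_cast; ring
  have h3 : ((-1 : ℂ)) ^ (t + m) * (-1) ^ (t + m) = 1 := by
    rw [← pow_add, ← two_mul, pow_mul]; norm_num
  calc (-1 : ℂ) ^ (t + m) * a ^ (-((t + m : ℕ) : ℤ)) * q ^ (-((t + m : ℕ) : ℤ) ^ 2) *
        (α t * ((-1) ^ (t + m) * a ^ m * q ^ (m ^ 2 + 2 * t * m) /
          (qPoch q q m * qPoch (a * q) q (t + m + t))))
      = (((-1 : ℂ)) ^ (t + m) * (-1) ^ (t + m)) *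
          ((a ^ (-((t + m : ℕ) : ℤ)) * a ^ m) *
            ((q ^ (-((t + m : ℕ) : ℤ) ^ 2) * q ^ (m ^ 2 + 2 * t * m)) * α t)) /
          (qPoch q q m * qPoch (a * q) q (t + m + t)) := by ring
    _ = a ^ (-(t : ℤ)) * q ^ (-(t : ℤ) ^ 2) * α t /
          (qPoch q q m * qPoch (a * q) q (t + m + t)) := by rw [h1, h2, h3]; ring
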